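/- Let n ≥ 1, let H be a symmetric n×n real matrix, let N be a symmetric positive definite n×n real matrix, let g ∈ ℝ^n, let R > 0, and let λ ≥ 0 and p ∈ ℝ^n satisfy: (i) (H + λN)·p = −g; (ii) H + λN is positive semidefinite; (iii) p^T·N·p ≤ R²; and (iv) λ·(p^T·N·p − R²) = 0. Then p is a global minimizer of the quadratic model m(z) = g^T·z + (1/2)·z^T·H·z over the trust region {z ∈ ℝ^n : z^T·N·z ≤ R²}. -/

import Mathlib

open Matrix

/-- Global optimality characterization of the trust-region step: if
`(H + λN)p = -g` with `H + λN ⪰ 0`, `pᵀNp ≤ R²`, and complementarity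
`λ(pᵀNp - R²) = 0`, then `p` globally minimizes the quadratic model
`m(z) = gᵀz + (1/2)zᵀHz` over the ellipsoidal trust region `{z : zᵀNz ≤ R²}`. -/
theorem stmt_16 (n : ℕ) (hn : 1 ≤ n)
    (H N : Matrix (Fin n) (Fin n) ℝ) (hH : H.IsSymm) (hN : N.PosDef)
    (g p : Fin n → ℝ) (R lam : ℝ) (hR : 0 < R) (hlam : 0 ≤ lam)
    (h1 : (H + lam • N) *ᵥ p = -g)
    (h2 : (H + lam • N).PosSemidef)
    (h3 : p ⬝ᵥ (N *ᵥ p) ≤ R ^ 2)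
    (h4 : lam * (p ⬝ᵥ (N *ᵥ p) - R ^ 2) = 0) :
    ∀ z : Fin n → ℝ, z ⬝ᵥ (N *ᵥ z) ≤ R ^ 2 →
      g ⬝ᵥ p + (1 / 2) * (p ⬝ᵥ (H *ᵥ p)) ≤ g ⬝ᵥ z + (1 / 2) * (z ⬝ᵥ (H *ᵥ z)) := by
  intro z hz
  set A : Matrix (Fin n) (Fin n) ℝ := H + lam • N with hA
  -- A is symmetric
  have hAsymm : A.IsSymm := by
    have hNs : N.IsSymm := hN.isHermitian
    unfold Matrix.IsSymm at *
    simp [hA, Matrix.transpose_add, Matrix.transpose_smul, hH, hNs]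
  -- key nonnegativity
  have key : 0 ≤ (z - p) ⬝ᵥ (A *ᵥ (z - p)) := by
    have := h2.dotProduct_mulVec_nonneg (z - p); rwa [star_trivial] at this
  -- symmetry: z ⬝ᵥ (A *ᵥ p) = p ⬝ᵥ (A *ᵥ z)
  have hsym : z ⬝ᵥ (A *ᵥ p) = p ⬝ᵥ (A *ᵥ z) := by
    rw [Matrix.dotProduct_mulVec, ← Matrix.mulVec_transpose, hAsymm, dotProduct_comm]
  have e1 : z ⬝ᵥ (A *ᵥ p) = -(z ⬝ᵥ g) := by rw [h1, dotProduct_neg]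
  have e2 : p ⬝ᵥ (A *ᵥ p) = -(p ⬝ᵥ g) := by rw [h1, dotProduct_neg]
  -- expand the quadratic form
  have expand : (z - p) ⬝ᵥ (A *ᵥ (z - p))
      = z ⬝ᵥ (A *ᵥ z) - 2 * (z ⬝ᵥ (A *ᵥ p)) + p ⬝ᵥ (A *ᵥ p) := by
    simp only [Matrix.mulVec_sub, sub_dotProduct, dotProduct_sub]
    rw [hsym]; ring
  -- A quadratic forms in terms of H and N
  have qz : z ⬝ᵥ (A *ᵥ z) = z ⬝ᵥ (H *ᵥ z) + lam * (z ⬝ᵥ (N *ᵥ z)) := by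
    simp [hA, Matrix.add_mulVec, Matrix.smul_mulVec, dotProduct_add,
      dotProduct_smul, smul_eq_mul]
  have qp : p ⬝ᵥ (A *ᵥ p) = p ⬝ᵥ (H *ᵥ p) + lam * (p ⬝ᵥ (N *ᵥ p)) := by
    simp [hA, Matrix.add_mulVec, Matrix.smul_mulVec, dotProduct_add,
      dotProduct_smul, smul_eq_mul]
  have hzN : lam * (z ⬝ᵥ (N *ᵥ z)) ≤ lam * R ^ 2 :=
    mul_le_mul_of_nonneg_left hz hlam
  have hgz : z ⬝ᵥ g = g ⬝ᵥ z := dotProduct_comm z g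
  have hgp : p ⬝ᵥ g = g ⬝ᵥ p := dotProduct_comm p g
  nlinarith [key, expand, qz, qp, h4]
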